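/- Let X and H be real Hilbert spaces, e : X → H a continuous linear map, O ⊆ X an open convex set, X_ad ⊆ O a convex set, and j : O → ℝ twice continuously Fréchet differentiable with D²j(h)[q,q] ≥ c_E·‖e q‖_H² for all h ∈ X_ad and all q ∈ X, where c_E > 0. If h* ∈ X_ad satisfies the variational inequality Dj(h*)[h − h*] ≥ 0 for all h ∈ X_ad, then j(h) − j(h*) ≥ (c_E/2)·‖e(h − h*)‖_H² for every h ∈ X_ad. -/

import Mathlib

/-- Abstract two-norm setting: quadratic growth at a stationary point. If `h* ∈ X_ad`
satisfies the variational inequality `Dj(h*)[h − h*] ≥ 0` for all `h ∈ X_ad`, and the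
second derivative of `j` is `H`-coercive on `X_ad`, then
`j(h) − j(h*) ≥ (c_E/2)‖e(h − h*)‖_H²` for every `h ∈ X_ad`. -/
theorem two_norm_quadratic_growth
    {X : Type*} [NormedAddCommGroup X] [InnerProductSpace ℝ X] [CompleteSpace X]
    {H : Type*} [NormedAddCommGroup H] [InnerProductSpace ℝ H] [CompleteSpace H]
    (e : X →L[ℝ] H)
    (O : Set X) (hO : IsOpen O) (hOconv : Convex ℝ O)
    (Xad : Set X) (hXadO : Xad ⊆ O) (hXad : Convex ℝ Xad)
    (j : X → ℝ) (j' : X → X →L[ℝ] ℝ) (j'' : X → X →L[ℝ] X →L[ℝ] ℝ)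
    (hj' : ∀ h ∈ O, HasFDerivAt j (j' h) h)
    (hj'' : ∀ h ∈ O, HasFDerivAt j' (j'' h) h)
    (hj''cont : ContinuousOn j'' O)
    (cE : ℝ) (hcE : 0 < cE)
    (hcoerc : ∀ h ∈ Xad, ∀ q : X, cE * ‖e q‖ ^ 2 ≤ j'' h q q)
    (hstar : X) (hstar_mem : hstar ∈ Xad)
    (hVI : ∀ h ∈ Xad, j' hstar (h - hstar) ≥ 0) :
    ∀ h ∈ Xad, j h - j hstar ≥ cE / 2 * ‖e (h - hstar)‖ ^ 2 := by
  intro h hmem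
  set q : X := h - hstar with hq
  set γ : ℝ → X := fun t => hstar + t • q with hγdef
  have hγ : ∀ t : ℝ, HasDerivAt γ q t := fun t => by
    have := ((hasDerivAt_id t).smul_const q).const_add hstar; simp only [one_smul] at this; exact this
  have hγXad : ∀ t ∈ Set.Icc (0:ℝ) 1, γ t ∈ Xad := by
    intro t ht
    have : γ t = (1 - t) • hstar + t • h := by
      simp only [hγdef, hq]; module
    rw [this]
    exact hXad hstar_mem hmem (by linarith [ht.2]) ht.1 (by ring)
  have hγO : ∀ t ∈ Set.Icc (0:ℝ) 1, γ t ∈ O := fun t ht => hXadO (hγXad t ht)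
  set K : ℝ := cE / 2 * ‖e q‖ ^ 2 with hK
  set ψ : ℝ → ℝ := fun t => j (γ t) - t ^ 2 * K with hψdef
  set ψ' : ℝ → ℝ := fun t => j' (γ t) q - 2 * t * K with hψ'def
  have hψ : ∀ t ∈ Set.Icc (0:ℝ) 1, HasDerivAt ψ (ψ' t) t := by
    intro t ht
    have h1 : HasDerivAt (fun t => j (γ t)) (j' (γ t) q) t :=
      (hj' (γ t) (hγO t ht)).comp_hasDerivAt t (hγ t)
    have h2 : HasDerivAt (fun t : ℝ => t ^ 2 * K) (2 * t * K) t := by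
      have := (hasDerivAt_pow 2 t).mul_const K
      simpa [mul_comm] using this
    exact h1.sub h2
  have hψ' : ∀ t ∈ Set.Icc (0:ℝ) 1,
      HasDerivAt ψ' (j'' (γ t) q q - 2 * K) t := by
    intro t ht
    have F := ContinuousLinearMap.apply ℝ ℝ q
    have h1 : HasDerivAt (fun t => j' (γ t) q) (j'' (γ t) q q) t := by
      have := ((ContinuousLinearMap.apply ℝ ℝ q).hasFDerivAt.comp (γ t)
        (hj'' (γ t) (hγO t ht))).comp_hasDerivAt t (hγ t)
      exact this
    have h2 : HasDerivAt (fun t : ℝ => 2 * t * K) (2 * K) t := by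
      have := ((hasDerivAt_id t).const_mul 2).mul_const K
      simpa [mul_comm, mul_assoc] using this
    exact h1.sub h2
  -- MVT on [0,1] for ψ
  have hcont : ContinuousOn ψ (Set.Icc 0 1) := fun t ht => (hψ t ht).continuousAt.continuousWithinAt
  obtain ⟨c, hc, hceq⟩ := exists_hasDerivAt_eq_slope ψ ψ' (by norm_num)
    hcont (fun t ht => hψ t (Set.mem_Icc_of_Ioo ht))
  -- ψ' c ≥ ψ' 0 via MVT on [0,c]
  have hψ'0 : ψ' 0 = j' hstar q := by simp [hψ'def, hγdef]
  have hcIcc : Set.Icc (0:ℝ) c ⊆ Set.Icc 0 1 :=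
    Set.Icc_subset_Icc le_rfl hc.2.le
  have hψ'c : ψ' 0 ≤ ψ' c := by
    obtain ⟨d, hd, hdeq⟩ := exists_hasDerivAt_eq_slope ψ' (fun t => j'' (γ t) q q - 2 * K)
      hc.1 (fun t ht => ((hψ' t (hcIcc ht)).continuousAt).continuousWithinAt)
      (fun t ht => hψ' t (hcIcc (Set.mem_Icc_of_Ioo ht)))
    have hd2 : (0:ℝ) ≤ j'' (γ d) q q - 2 * K := by
      have := hcoerc (γ d) (hγXad d (hcIcc (Set.mem_Icc_of_Ioo hd))) q
      simp only [hK]; linarith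
    rw [hdeq] at hd2
    have hpos : (0:ℝ) < c - 0 := by simpa using hc.1
    have := (le_div_iff₀ hpos).mp (by simpa using hd2)
    linarith
  -- conclude
  have hψ1 : ψ 1 = j h - K := by
    have : γ 1 = h := by simp [hγdef, hq]
    simp [hψdef, this]
  have hψ0 : ψ 0 = j hstar := by simp [hψdef, hγdef]
  have hVIq : 0 ≤ j' hstar q := hVI h hmem
  have : ψ 1 - ψ 0 = ψ' c := by rw [hceq]; ring
  rw [hψ1, hψ0] at this
  clear_value K ψ ψ' q γ
  linarith [hψ'c, hVIq, hψ'0]
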